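/- Let s ∈ S and α, β words in the generators of a Coxeter system (W,S). If the concatenations αβ, αs, and sβ are all reduced words, then αsβ is a reduced word. -/

import Mathlib

namespace SortingPaper

variable {B : Type*} {M : CoxeterMatrix B} {W : Type*} [Group W]

/-- The subword of `ω` with index set `A` (0-based indices). -/
def subword (ω : List B) (A : Finset ℕ) : List B :=
  (A.sort (· ≤ ·)).filterMap (fun i => ω[i]?)

/-- Lexicographic comparison of index sets: `A ≤lex C` iff `A = C` or the minimum
element of the symmetric difference belongs to `A`. -/
def lexLE (A C : Finset ℕ) : Prop :=
  A = C ∨ ∃ k, k ∈ A ∧ k ∉ C ∧ ∀ j < k, (j ∈ A ↔ j ∈ C)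

/-- `A` is the index set of an ω-sorted word: the corresponding subword is reduced, and
`A` is lexicographically least among index sets of reduced subwords of `ω` with the
same product in `W`. -/
def IsSorted (cs : CoxeterSystem M W) (ω : List B) (A : Finset ℕ) : Prop :=
  A ⊆ Finset.range ω.length ∧ cs.IsReduced (subword ω A) ∧
  ∀ C ⊆ Finset.range ω.length, cs.IsReduced (subword ω C) →
    cs.wordProd (subword ω C) = cs.wordProd (subword ω A) → lexLE A C

/-- The ω-sorting algorithm (auxiliary): scan the word, recording positions that are
left descents of the current element. -/
noncomputable def sortAux (cs : CoxeterSystem M W) : List B → ℕ → W → Finset ℕ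
  | [], _, _ => ∅
  | s :: rest, i, x =>
    if cs.length (cs.simple s * x) < cs.length x then
      insert i (sortAux cs rest (i + 1) (cs.simple s * x))
    else sortAux cs rest (i + 1) x

/-- The index set produced by the ω-sorting algorithm applied to `u ∈ W`. -/
noncomputable def sortIdx (cs : CoxeterSystem M W) (ω : List B) (u : W) : Finset ℕ :=
  sortAux cs ω 0 u

open List CoxeterSystem

open scoped Classical

/-- One step of Tits' parity representation: the involution of `W × ZMod 2`
associated to the simple reflection `i`. -/
noncomputable def mu (cs : CoxeterSystem M W) (i : B) : Equiv.Perm (W × ZMod 2) :=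
  Function.Involutive.toPerm
    (fun p => (cs.simple i * p.1 * cs.simple i,
      p.2 + if p.1 = cs.simple i then 1 else 0))
    (by
      rintro ⟨t, e⟩
      have h1 : cs.simple i * (cs.simple i * t * cs.simple i) * cs.simple i = t := by
        simp [mul_assoc, cs.simple_mul_simple_cancel_left]
      have h2 : (cs.simple i * t * cs.simple i = cs.simple i) ↔ t = cs.simple i := by
        constructor
        · intro h
          have := congrArg (fun w => cs.simple i * w * cs.simple i) h
          simpa [mul_assoc, cs.simple_mul_simple_cancel_left] using this
        · rintro rfl
          simp [mul_assoc, cs.simple_mul_simple_cancel_left]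
      refine Prod.ext h1 ?_
      simp only [if_congr h2 rfl rfl]
      split_ifs with h
      · show e + 1 + 1 = e
        rw [add_assoc, show (1 : ZMod 2) + 1 = 0 by decide, add_zero]
      · simp)

theorem mu_apply (cs : CoxeterSystem M W) (i : B) (t : W) (e : ZMod 2) :
    mu cs i (t, e) = (cs.simple i * t * cs.simple i,
      e + if t = cs.simple i then 1 else 0) := rfl



theorem conj_eq_iff (x u v : W) : (x * u * x⁻¹ = v) ↔ (u = x⁻¹ * v * x) := by
  constructor
  · rintro rfl; group
  · rintro rfl; group

section Braid

variable (cs : CoxeterSystem M W)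

theorem simple_conj_eq_iff (j : B) (u v : W) :
    (cs.simple j * u * cs.simple j = v) ↔ (u = cs.simple j * v * cs.simple j) := by
  constructor
  · rintro rfl
    simp [mul_assoc, cs.simple_mul_simple_cancel_left, cs.simple_mul_simple_self]
  · rintro rfl
    simp [mul_assoc, cs.simple_mul_simple_cancel_left, cs.simple_mul_simple_self]

theorem simple_swap_pow (i j : B) (k : ℕ) :
    cs.simple j * (cs.simple i * cs.simple j) ^ k
      = ((cs.simple i * cs.simple j) ^ k)⁻¹ * cs.simple j := by
  induction k with
  | zero => simp
  | succ k ih =>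
    have hbase : cs.simple j * (cs.simple i * cs.simple j)
        = (cs.simple i * cs.simple j)⁻¹ * cs.simple j := by
      rw [mul_inv_rev, cs.inv_simple, cs.inv_simple, mul_assoc]
    calc cs.simple j * (cs.simple i * cs.simple j) ^ (k+1)
        = (cs.simple j * (cs.simple i * cs.simple j) ^ k) * (cs.simple i * cs.simple j) := by
          rw [pow_succ, mul_assoc]
      _ = ((cs.simple i * cs.simple j) ^ k)⁻¹
            * (cs.simple j * (cs.simple i * cs.simple j)) := by rw [ih, mul_assoc]
      _ = ((cs.simple i * cs.simple j) ^ (k+1))⁻¹ * cs.simple j := by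
          rw [hbase]; set p := cs.simple i * cs.simple j with hp; group

theorem conj1 (i j : B) (n : ℕ) :
    ((cs.simple i * cs.simple j) ^ n)⁻¹ * cs.simple j * (cs.simple i * cs.simple j) ^ n
      = ((cs.simple i * cs.simple j) ^ (2*n))⁻¹ * cs.simple j := by
  rw [mul_assoc, simple_swap_pow, two_mul, pow_add, mul_inv_rev, mul_assoc]

theorem conj2 (i j : B) (n : ℕ) :
    ((cs.simple i * cs.simple j) ^ n)⁻¹ * (cs.simple j * cs.simple i * cs.simple j)
        * (cs.simple i * cs.simple j) ^ n
      = ((cs.simple i * cs.simple j) ^ (2*n+1))⁻¹ * cs.simple j := by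
  have h1 : cs.simple j * cs.simple i * cs.simple j
      = (cs.simple i * cs.simple j)⁻¹ * cs.simple j := by
    rw [mul_inv_rev, cs.inv_simple, cs.inv_simple]
  calc ((cs.simple i * cs.simple j) ^ n)⁻¹ * (cs.simple j * cs.simple i * cs.simple j)
        * (cs.simple i * cs.simple j) ^ n
      = ((cs.simple i * cs.simple j) ^ n)⁻¹ * (cs.simple i * cs.simple j)⁻¹
          * (cs.simple j * (cs.simple i * cs.simple j) ^ n) := by
        rw [h1]; set p := cs.simple i * cs.simple j with hp; group
    _ = ((cs.simple i * cs.simple j) ^ n)⁻¹ * (cs.simple i * cs.simple j)⁻¹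
          * (((cs.simple i * cs.simple j) ^ n)⁻¹ * cs.simple j) := by rw [simple_swap_pow]
    _ = ((cs.simple i * cs.simple j) ^ (2*n+1))⁻¹ * cs.simple j := by
        set p := cs.simple i * cs.simple j with hp; group

theorem mu_mul_pow (i j : B) (n : ℕ) (t : W) (e : ZMod 2) :
    ((mu cs i * mu cs j) ^ n) (t, e) =
      ((cs.simple i * cs.simple j) ^ n * t * ((cs.simple i * cs.simple j) ^ n)⁻¹,
        e + ∑ k ∈ Finset.range n,
          ((if t = ((cs.simple i * cs.simple j) ^ (2*k))⁻¹ * cs.simple j then 1 else 0) +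
           (if t = ((cs.simple i * cs.simple j) ^ (2*k+1))⁻¹ * cs.simple j
              then (1 : ZMod 2) else 0))) := by
  induction n with
  | zero => simp
  | succ n ih =>
    rw [pow_succ', Equiv.Perm.mul_apply, ih, Equiv.Perm.mul_apply, mu_apply, mu_apply]
    refine Prod.ext ?_ ?_
    · show cs.simple i * (cs.simple j * _ * cs.simple j) * cs.simple i = _
      simp [pow_succ', mul_assoc, mul_inv_rev, cs.inv_simple]
    · show _ + _ + _ = _
      have iff1 : ((cs.simple i * cs.simple j) ^ n * t * ((cs.simple i * cs.simple j) ^ n)⁻¹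
          = cs.simple j) ↔ t = ((cs.simple i * cs.simple j) ^ (2*n))⁻¹ * cs.simple j := by
        rw [conj_eq_iff, conj1]
      have iff2 : (cs.simple j * ((cs.simple i * cs.simple j) ^ n * t
            * ((cs.simple i * cs.simple j) ^ n)⁻¹) * cs.simple j = cs.simple i)
          ↔ t = ((cs.simple i * cs.simple j) ^ (2*n+1))⁻¹ * cs.simple j := by
        rw [simple_conj_eq_iff, conj_eq_iff, conj2]
      rw [if_congr iff1 rfl rfl, if_congr iff2 rfl rfl, Finset.sum_range_succ]
      ring

theorem even_sum_aux (g : ℕ → ZMod 2) (m : ℕ) :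
    ∑ n ∈ Finset.range (2*m), g n = ∑ k ∈ Finset.range m, (g (2*k) + g (2*k+1)) := by
  induction m with
  | zero => simp
  | succ m ih =>
    rw [show 2*(m+1) = 2*m+1+1 by omega, Finset.sum_range_succ, Finset.sum_range_succ,
      Finset.sum_range_succ, ih, add_assoc]

theorem period_sum (p : W) (m : ℕ) (hp : p ^ m = 1) (t c : W) :
    ∑ n ∈ Finset.range (2*m), (if t = (p ^ n)⁻¹ * c then (1 : ZMod 2) else 0) = 0 := by
  rw [two_mul, Finset.sum_range_add]
  have h : ∀ n : ℕ, (p ^ (m + n))⁻¹ = (p ^ n)⁻¹ := fun n => by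
    rw [pow_add, hp, one_mul]
  simp only [h]
  exact CharTwo.add_self_eq_zero _

theorem mu_liftable : M.IsLiftable (fun i => mu cs i) := by
  intro i j
  apply Equiv.ext
  rintro ⟨t, e⟩
  change ((mu cs i * mu cs j) ^ M i j) (t, e) = (1 : Equiv.Perm (W × ZMod 2)) (t, e)
  rw [mu_mul_pow, Equiv.Perm.one_apply]
  have hsum : ∑ k ∈ Finset.range (M i j),
      ((if t = ((cs.simple i * cs.simple j) ^ (2*k))⁻¹ * cs.simple j then 1 else 0) +
       (if t = ((cs.simple i * cs.simple j) ^ (2*k+1))⁻¹ * cs.simple j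
          then (1 : ZMod 2) else 0)) = 0 := by
    rw [← even_sum_aux (fun n =>
      if t = ((cs.simple i * cs.simple j) ^ n)⁻¹ * cs.simple j then (1 : ZMod 2) else 0)]
    exact period_sum (cs.simple i * cs.simple j) (M i j)
      (cs.simple_mul_simple_pow i j) t (cs.simple j)
  rw [hsum, add_zero, cs.simple_mul_simple_pow i j]
  simp

end Braid

section Nu

variable (cs : CoxeterSystem M W)

/-- Tits' parity representation of `W`. -/
noncomputable def phi : W →* Equiv.Perm (W × ZMod 2) :=
  cs.lift ⟨fun i => mu cs i, mu_liftable cs⟩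

theorem phi_simple (i : B) : phi cs (cs.simple i) = mu cs i :=
  cs.lift_apply_simple (mu_liftable cs) i

/-- The parity cocycle: `nu cs w t` is `1` iff `t` is a "right inversion with multiplicity". -/
noncomputable def nu (w t : W) : ZMod 2 := ((phi cs w) (t, 0)).2

theorem phi_apply (w : W) : ∀ (t : W) (e : ZMod 2),
    phi cs w (t, e) = (w * t * w⁻¹, e + nu cs w t) := by
  refine cs.simple_induction_left (p := fun w => ∀ (t : W) (e : ZMod 2),
    phi cs w (t, e) = (w * t * w⁻¹, e + nu cs w t)) w ?_ ?_
  · intro t e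
    simp [nu]
  · intro w i ih t e
    have h1 : phi cs (cs.simple i * w) = mu cs i * phi cs w := by
      rw [map_mul, phi_simple]
    have h2 : nu cs (cs.simple i * w) t
        = nu cs w t + (if w * t * w⁻¹ = cs.simple i then 1 else 0) := by
      show ((phi cs (cs.simple i * w)) (t, 0)).2 = _
      rw [h1, Equiv.Perm.mul_apply, ih, mu_apply]
      simp [add_assoc]
    rw [h1, Equiv.Perm.mul_apply, ih, mu_apply]
    refine Prod.ext ?_ ?_
    · show cs.simple i * (w * t * w⁻¹) * cs.simple i = _
      simp [mul_assoc, mul_inv_rev, cs.inv_simple]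
    · show e + nu cs w t + _ = e + nu cs (cs.simple i * w) t
      rw [h2, add_assoc]

theorem nu_mul (u v t : W) :
    nu cs (u * v) t = nu cs v t + nu cs u (v * t * v⁻¹) := by
  show ((phi cs (u * v)) (t, 0)).2 = _
  rw [map_mul, Equiv.Perm.mul_apply, phi_apply, phi_apply]
  simp [add_assoc]

theorem nu_simple (i : B) (t : W) :
    nu cs (cs.simple i) t = if t = cs.simple i then 1 else 0 := by
  show ((phi cs (cs.simple i)) (t, 0)).2 = _
  rw [phi_simple, mu_apply]
  simp

theorem nu_one (t : W) : nu cs 1 t = 0 := by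
  show ((phi cs 1) (t, 0)).2 = 0
  simp

theorem nu_inv (x t : W) : nu cs x⁻¹ (x * t * x⁻¹) = nu cs x t := by
  have h : phi cs x (phi cs x⁻¹ (x * t * x⁻¹, 0)) = (x * t * x⁻¹, 0) := by
    rw [← Equiv.Perm.mul_apply, ← map_mul, mul_inv_cancel, map_one, Equiv.Perm.one_apply]
  rw [phi_apply cs x⁻¹ (x * t * x⁻¹) 0] at h
  have e1 : x⁻¹ * (x * t * x⁻¹) * x⁻¹⁻¹ = t := by group
  rw [e1, phi_apply cs x t] at h
  have h2 := congrArg Prod.snd h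
  simp only [zero_add] at h2
  rw [add_eq_zero_iff_eq_neg, CharTwo.neg_eq] at h2
  exact h2

theorem nu_refl (x : W) (i : B) :
    nu cs (x * cs.simple i * x⁻¹) (x * cs.simple i * x⁻¹) = 1 := by
  have hassoc : x * cs.simple i * x⁻¹ = x * (cs.simple i * x⁻¹) := by rw [mul_assoc]
  set t := x * cs.simple i * x⁻¹ with hts
  have e1 : (cs.simple i * x⁻¹) * t * (cs.simple i * x⁻¹)⁻¹ = cs.simple i := by
    rw [hts]
    simp [mul_assoc, mul_inv_rev, inv_mul_cancel_left, cs.simple_mul_simple_cancel_left]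
  have e2 : x⁻¹ * t * x⁻¹⁻¹ = cs.simple i := by
    rw [hts]
    simp [mul_assoc, inv_mul_cancel_left]
  have step1 : nu cs t t = nu cs (cs.simple i * x⁻¹) t + nu cs x (cs.simple i) := by
    nth_rewrite 1 [hassoc]
    rw [nu_mul, e1]
  have step2 : nu cs (cs.simple i * x⁻¹) t
      = nu cs x (cs.simple i) + 1 := by
    rw [nu_mul, e2, nu_simple, if_pos rfl]
    congr 1
    rw [hts]
    exact nu_inv cs x (cs.simple i)
  rw [step1, step2]
  have : ∀ a : ZMod 2, a + 1 + a = 1 := by decide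
  exact this _

theorem nu_mem_rightInvSeq (ω : List B) (t : W) (h : nu cs (cs.wordProd ω) t ≠ 0) :
    t ∈ cs.rightInvSeq ω := by
  induction ω with
  | nil => rw [cs.wordProd_nil, nu_one] at h; exact absurd rfl h
  | cons i ω ih =>
    rw [cs.wordProd_cons, nu_mul, nu_simple] at h
    have hcons : cs.rightInvSeq (i :: ω)
        = ((cs.wordProd ω)⁻¹ * cs.simple i * cs.wordProd ω) :: cs.rightInvSeq ω := rfl
    rw [hcons, List.mem_cons]
    by_cases hc : cs.wordProd ω * t * (cs.wordProd ω)⁻¹ = cs.simple i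
    · left
      rw [conj_eq_iff] at hc
      exact hc
    · right
      rw [if_neg hc, add_zero] at h
      exact ih h

theorem exchange (ω : List B) (t : W) (ht : cs.IsReflection t)
    (_hred : cs.IsReduced ω)
    (h : cs.length (cs.wordProd ω * t) < cs.length (cs.wordProd ω)) :
    t ∈ cs.rightInvSeq ω := by
  apply nu_mem_rightInvSeq
  intro h0
  have h1 : nu cs (cs.wordProd ω * t) t = 1 := by
    have e : t * t * t⁻¹ = t := by group
    rw [nu_mul, e, h0, add_zero]
    obtain ⟨x, i, rfl⟩ := ht
    exact nu_refl cs x i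
  obtain ⟨ψ, hψred, hψ⟩ := cs.exists_reduced_word' (cs.wordProd ω * t)
  have h2 : t ∈ cs.rightInvSeq ψ := by
    apply nu_mem_rightInvSeq
    rw [← hψ, h1]
    exact one_ne_zero
  have h3 := (cs.isRightInversion_of_mem_rightInvSeq hψred h2).2
  rw [← hψ] at h3
  have h4 : cs.wordProd ω * t * t = cs.wordProd ω := by
    rw [mul_assoc, ht.mul_self, mul_one]
  rw [h4] at h3
  omega

theorem length_wordProd_mod_two (ω : List B) :
    cs.length (cs.wordProd ω) % 2 = ω.length % 2 := by
  induction ω with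
  | nil => simp
  | cons i ω ih =>
    rw [cs.wordProd_cons, List.length_cons, cs.length_mul_mod_two, cs.length_simple]
    omega

end Nu

theorem gluing_aux (cs : CoxeterSystem M W) (s : B) (α β : List B)
    (h1 : cs.IsReduced (α ++ β)) (h2 : cs.IsReduced (α ++ [s]))
    (h3 : cs.IsReduced (s :: β)) :
    cs.IsReduced (α ++ s :: β) := by
  by_contra hn
  have hn' : cs.length (cs.wordProd (α ++ s :: β)) ≠ (α ++ s :: β).length := hn
  have h1' : cs.length (cs.wordProd (α ++ β)) = (α ++ β).length := h1
  have hab : cs.wordProd (α ++ β) = cs.wordProd α * cs.wordProd β := cs.wordProd_append α β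
  have hasb : cs.wordProd (α ++ s :: β)
      = cs.wordProd α * (cs.simple s * cs.wordProd β) := by
    rw [cs.wordProd_append, cs.wordProd_cons]
  set t := (cs.wordProd β)⁻¹ * cs.simple s * cs.wordProd β with hts
  have ht : cs.IsReflection t := ⟨(cs.wordProd β)⁻¹, s, by rw [inv_inv]⟩
  have hwt : cs.wordProd (α ++ β) * t = cs.wordProd (α ++ s :: β) := by
    rw [hab, hasb, hts]; group
  have hpar2 := length_wordProd_mod_two cs (α ++ s :: β)
  have hle := cs.length_wordProd_le (α ++ s :: β)
  simp only [List.length_append, List.length_cons] at h1' hn' hpar2 hle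
  have hlt : cs.length (cs.wordProd (α ++ β) * t) < cs.length (cs.wordProd (α ++ β)) := by
    rw [hwt]
    omega
  have hmem := exchange cs (α ++ β) t ht h1 hlt
  rw [List.mem_iff_getElem] at hmem
  obtain ⟨j, hj, hjt⟩ := hmem
  have hj' : j < (α ++ β).length := by
    rw [cs.length_rightInvSeq] at hj
    exact hj
  have hgetD : (cs.rightInvSeq (α ++ β)).getD j 1 = t := by
    rw [List.getD_eq_getElem _ 1 hj, hjt]
  have hkey := cs.wordProd_mul_getD_rightInvSeq (α ++ β) j
  rw [hgetD, hwt] at hkey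
  rw [List.length_append] at hj'
  rcases lt_or_ge j α.length with hcase | hcase
  · rw [List.eraseIdx_append_of_lt_length hcase, hasb, cs.wordProd_append] at hkey
    rw [← mul_assoc] at hkey
    have hkey2 : cs.wordProd α * cs.simple s = cs.wordProd (α.eraseIdx j) :=
      mul_right_cancel hkey
    have hb1 : cs.length (cs.wordProd α * cs.simple s) ≤ (α.eraseIdx j).length := by
      rw [hkey2]; exact cs.length_wordProd_le _
    have hb2 : (α.eraseIdx j).length + 1 = α.length := List.length_eraseIdx_add_one hcase
    have h2' : cs.length (cs.wordProd α * cs.simple s) = α.length + 1 := by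
      have e : cs.wordProd (α ++ [s]) = cs.wordProd α * cs.simple s := by
        rw [cs.wordProd_append, cs.wordProd_singleton]
      have h2'' : cs.length (cs.wordProd (α ++ [s])) = (α ++ [s]).length := h2
      rw [e, List.length_append, List.length_singleton] at h2''
      exact h2''
    omega
  · rw [List.eraseIdx_append_of_length_le hcase, hasb, cs.wordProd_append] at hkey
    have hkey2 : cs.simple s * cs.wordProd β = cs.wordProd (β.eraseIdx (j - α.length)) :=
      mul_left_cancel hkey
    have hcase2 : j - α.length < β.length := by omega
    have hb1 : cs.length (cs.simple s * cs.wordProd β)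
        ≤ (β.eraseIdx (j - α.length)).length := by
      rw [hkey2]; exact cs.length_wordProd_le _
    have hb2 : (β.eraseIdx (j - α.length)).length + 1 = β.length :=
      List.length_eraseIdx_add_one hcase2
    have h3' : cs.length (cs.simple s * cs.wordProd β) = β.length + 1 := by
      have e : cs.wordProd (s :: β) = cs.simple s * cs.wordProd β := cs.wordProd_cons s β
      have h3'' : cs.length (cs.wordProd (s :: β)) = (s :: β).length := h3
      rw [e, List.length_cons] at h3''
      exact h3''
    omega

/-- Gluing: if `αβ`, `αs` and `sβ` are reduced words, then so is
`αsβ`. -/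
theorem gluing (cs : CoxeterSystem M W) (s : B) (α β : List B)
    (h1 : cs.IsReduced (α ++ β)) (h2 : cs.IsReduced (α ++ [s]))
    (h3 : cs.IsReduced (s :: β)) :
    cs.IsReduced (α ++ s :: β) := by
  exact gluing_aux cs s α β h1 h2 h3

end SortingPaper
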